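/- arXiv:2012.15135 — 2 statements merged into one kernel-verified Lean document; each statement's English description precedes it below -/
import Mathlib

section
/- For each integer k ≥ 1, the rational function P_{2k}(z) = (1 − z^{2k}(1 + z − z²))/(1 − z) is a polynomial with integer coefficients, irreducible over ℚ, which has exactly one root of modulus > 1; this root, denoted β_k, is a real Pisot number (all other roots of P_{2k} have modulus < 1). Moreover β_k < (1+√5)/2 for all k ≥ 1, the sequence (β_k)_{k≥1} is strictly increasing, and lim_{k→∞} β_k = (1+√5)/2. -/
open Polynomial Filter

noncomputable section
namespace Stmt17

def phi : ℝ := (1 + Real.sqrt 5) / 2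

lemma sqrt5_sq : Real.sqrt 5 ^ 2 = 5 := Real.sq_sqrt (by norm_num)

lemma sqrt5_gt : 2 < Real.sqrt 5 := by
  nlinarith [sqrt5_sq, Real.sqrt_nonneg 5]

lemma sqrt5_lt : Real.sqrt 5 < 3 := by
  nlinarith [sqrt5_sq, Real.sqrt_nonneg 5]

lemma phi_gt : (6:ℝ)/5 < phi := by unfold phi; nlinarith [sqrt5_gt]

lemma one_lt_phi : 1 < phi := lt_trans (by norm_num) phi_gt

lemma phi_lt_two : phi < 2 := by unfold phi; nlinarith [sqrt5_lt]

lemma phi_sq : phi ^ 2 = phi + 1 := by unfold phi; nlinarith [sqrt5_sq]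

/-- the auxiliary real function -/
def f (n : ℕ) (x : ℝ) : ℝ := x ^ n * (1 + x - x ^ 2)

lemma aux_pos {x : ℝ} (hx : 0 < x) (hx' : x < phi) : 0 < 1 + x - x ^ 2 := by
  nlinarith [phi_sq, one_lt_phi]

lemma aux_neg {x : ℝ} (hx' : phi < x) : 1 + x - x ^ 2 < 0 := by
  nlinarith [phi_sq, one_lt_phi]

lemma f_one (n : ℕ) : f n 1 = 1 := by simp [f]

lemma f_phi (n : ℕ) : f n phi = 0 := by
  have : 1 + phi - phi ^ 2 = 0 := by nlinarith [phi_sq]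
  simp [f, this]

/-- the derivative factor -/
def q (n : ℕ) (x : ℝ) : ℝ := n + (n+1)*x - (n+2)*x^2

lemma q_anti (n : ℕ) {x y : ℝ} (hx : 1 ≤ x) (hxy : x < y) : q n y < q n x := by
  unfold q
  have h0 : (0:ℝ) ≤ (n:ℝ) := Nat.cast_nonneg n
  nlinarith [mul_pos (sub_pos.mpr hxy) (show (0:ℝ) < ((n:ℝ)+2)*(x+y) - ((n:ℝ)+1) by nlinarith)]

lemma hasDerivAt_f (m : ℕ) (x : ℝ) : HasDerivAt (f (m+1)) (x ^ m * q (m+1) x) x := by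
  have h1 : HasDerivAt (fun y : ℝ => y ^ (m+1)) ((m+1 : ℕ) * x ^ m) x := hasDerivAt_pow (m+1) x
  have h2 : HasDerivAt (fun y : ℝ => 1 + y - y ^ 2) (1 - 2*x) x := by
    have := ((hasDerivAt_id x).const_add 1).sub (hasDerivAt_pow 2 x)
    exact this.congr_deriv (by simp)
  have := h1.mul h2
  exact this.congr_deriv (by
  unfold q
  push_cast
  ring)

lemma f_cont (n : ℕ) : Continuous (f n) := by
  unfold f; continuity

lemma exists_beta (n : ℕ) (hn : 2 ≤ n) : ∃ b, 6/5 < b ∧ b < phi ∧ f n b = 1 := by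
  have hcont : ContinuousOn (f n) (Set.Icc (6/5) phi) := (f_cont n).continuousOn
  have hle : (6:ℝ)/5 ≤ phi := le_of_lt phi_gt
  have h1 : 1 < f n (6/5) := by
    have hpow : ((6:ℝ)/5) ^ 2 ≤ ((6:ℝ)/5) ^ n := pow_le_pow_right₀ (by norm_num) hn
    have : (0:ℝ) < 1 + 6/5 - (6/5)^2 := by norm_num
    unfold f
    nlinarith
  have hmem : (1:ℝ) ∈ Set.Ioo (f n phi) (f n (6/5)) := by
    rw [f_phi]; exact ⟨by norm_num, h1⟩
  obtain ⟨b, hb, hfb⟩ := intermediate_value_Ioo' hle hcont hmem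
  exact ⟨b, hb.1, hb.2, hfb⟩

/-- the root of `f n = 1` in `(1, phi)` -/
def B (n : ℕ) : ℝ := if h : 2 ≤ n then (exists_beta n h).choose else 2

lemma B_gt (n : ℕ) (hn : 2 ≤ n) : 6/5 < B n := by
  rw [B, dif_pos hn]; exact (exists_beta n hn).choose_spec.1

lemma one_lt_B (n : ℕ) (hn : 2 ≤ n) : 1 < B n := lt_trans (by norm_num) (B_gt n hn)

lemma B_lt_phi (n : ℕ) (hn : 2 ≤ n) : B n < phi := by
  rw [B, dif_pos hn]; exact (exists_beta n hn).choose_spec.2.1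

lemma f_B (n : ℕ) (hn : 2 ≤ n) : f n (B n) = 1 := by
  rw [B, dif_pos hn]; exact (exists_beta n hn).choose_spec.2.2

/-- MVT helper: a point with derivative equal to slope -/
lemma slope_point (m : ℕ) {a b : ℝ} (hab : a < b) :
    ∃ c ∈ Set.Ioo a b, c ^ m * q (m+1) c = (f (m+1) b - f (m+1) a) / (b - a) :=
  exists_hasDerivAt_eq_slope (f (m+1)) _ hab (f_cont (m+1)).continuousOn
    (fun x _ => hasDerivAt_f m x)

lemma q_nonpos_of_slope_nonpos (m : ℕ) {a b : ℝ} (hab : a < b) (ha : 0 < a)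
    (h : f (m+1) b ≤ f (m+1) a) : ∃ c, a < c ∧ c < b ∧ q (m+1) c ≤ 0 := by
  obtain ⟨c, hc, hceq⟩ := slope_point m hab
  refine ⟨c, hc.1, hc.2, ?_⟩
  have hcpos : 0 < c := lt_trans ha hc.1
  have hslope : (f (m+1) b - f (m+1) a) / (b - a) ≤ 0 :=
    div_nonpos_iff.mpr (Or.inr ⟨by linarith, by linarith⟩)
  nlinarith [pow_pos hcpos m, hceq]

lemma q_nonneg_of_slope_nonneg (m : ℕ) {a b : ℝ} (hab : a < b) (ha : 0 < a)
    (h : f (m+1) a ≤ f (m+1) b) : ∃ c, a < c ∧ c < b ∧ 0 ≤ q (m+1) c := by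
  obtain ⟨c, hc, hceq⟩ := slope_point m hab
  refine ⟨c, hc.1, hc.2, ?_⟩
  have hcpos : 0 < c := lt_trans ha hc.1
  have hslope : 0 ≤ (f (m+1) b - f (m+1) a) / (b - a) :=
    div_nonneg (by linarith) (by linarith)
  nlinarith [pow_pos hcpos m, hceq]

lemma f_gt_one (n : ℕ) (hn : 2 ≤ n) {r : ℝ} (h1 : 1 < r) (h2 : r < B n) : 1 < f n r := by
  obtain ⟨m, rfl⟩ : ∃ m, n = m + 1 := ⟨n - 1, by omega⟩
  by_contra hcon
  push_neg at hcon
  obtain ⟨c₁, hc₁a, hc₁b, hc₁⟩ := q_nonpos_of_slope_nonpos m h1 one_pos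
    (by rw [f_one]; exact hcon)
  obtain ⟨c₂, hc₂a, hc₂b, hc₂⟩ := q_nonneg_of_slope_nonneg m h2 (by linarith)
    (by rw [f_B _ hn]; exact hcon)
  have := q_anti (m+1) (le_of_lt hc₁a) (lt_trans hc₁b hc₂a)
  linarith

/-- a Rolle point between 1 and B n -/
lemma exists_q_zero (n : ℕ) (hn : 2 ≤ n) : ∃ c, 1 < c ∧ c < B n ∧ q n c = 0 := by
  obtain ⟨m, rfl⟩ : ∃ m, n = m + 1 := ⟨n - 1, by omega⟩
  obtain ⟨c, hc, hceq⟩ := slope_point m (one_lt_B _ hn)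
  refine ⟨c, hc.1, hc.2, ?_⟩
  rw [f_B _ hn, f_one] at hceq
  simp only [sub_self, zero_div] at hceq
  have hcpos : 0 < c := lt_trans one_pos hc.1
  have := pow_pos hcpos m
  rcases mul_eq_zero.mp hceq with h | h
  · exact absurd h (by positivity)
  · exact h

lemma q_B_neg (n : ℕ) (hn : 2 ≤ n) : q n (B n) < 0 := by
  obtain ⟨c, hc1, hc2, hcq⟩ := exists_q_zero n hn
  have := q_anti n (le_of_lt hc1) hc2
  linarith

lemma f_lt_one (n : ℕ) (hn : 2 ≤ n) {r : ℝ} (h1 : B n < r) (h2 : r < phi) : f n r < 1 := by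
  obtain ⟨c₀, hc₀1, hc₀2, hc₀⟩ := exists_q_zero n hn
  obtain ⟨m, rfl⟩ : ∃ m, n = m + 1 := ⟨n - 1, by omega⟩
  by_contra hcon
  push_neg at hcon
  have hB1 : 1 < B (m+1) := one_lt_B _ hn
  obtain ⟨c₁, hc₁a, hc₁b, hc₁⟩ := q_nonneg_of_slope_nonneg m h1 (by linarith)
      (by rw [f_B _ hn]; exact hcon)
  have := q_anti (m+1) (le_of_lt hc₀1) (lt_trans hc₀2 hc₁a)
  linarith

lemma lt_B_of_f_gt (n : ℕ) (hn : 2 ≤ n) {r : ℝ} (h1 : 1 < r) (h2 : r < phi)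
    (hf : 1 < f n r) : r < B n := by
  rcases lt_trichotomy r (B n) with h | h | h
  · exact h
  · rw [h, f_B n hn] at hf; linarith
  · have := f_lt_one n hn h h2; linarith


/-! ## The polynomial -/

def G (n : ℕ) : Polynomial ℤ := ∑ j ∈ Finset.range n, X ^ j

def Pol (n : ℕ) : Polynomial ℤ := G n - X ^ (n+1)

lemma Pol_identity (n : ℕ) :
    (1 - X) * Pol n = 1 - X ^ n * (1 + X - X ^ 2) := by
  have h := geom_sum_mul (X : Polynomial ℤ) n
  unfold Pol G
  linear_combination (-1 : Polynomial ℤ) * h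

/-- evaluation identity over any commutative ring -/
lemma eval_identity {A : Type*} [CommRing A] (n : ℕ) (z : A) :
    (1 - z) * aeval z (Pol n) = 1 - z ^ n * (1 + z - z ^ 2) := by
  have := congrArg (aeval z) (Pol_identity n)
  simpa using this

lemma key_eq {A : Type*} [CommRing A] {n : ℕ} {z : A}
    (hz : aeval z (Pol n) = 0) : z ^ n * (1 + z - z ^ 2) = 1 := by
  have := eval_identity n z
  rw [hz, mul_zero] at this
  linear_combination this

lemma sum_eq {A : Type*} [CommRing A] {n : ℕ} {z : A}
    (hz : aeval z (Pol n) = 0) : z ^ (n+1) = ∑ j ∈ Finset.range n, z ^ j := by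
  have : aeval z (Pol n) = (∑ j ∈ Finset.range n, z ^ j) - z ^ (n+1) := by
    simp [Pol, G]
  rw [this] at hz
  linear_combination -hz

lemma aeval_one_ne {A : Type*} [Field A] [CharZero A] {n : ℕ} (hn : 2 ≤ n) :
    aeval (1 : A) (Pol n) ≠ 0 := by
  have : aeval (1 : A) (Pol n) = (n : A) - 1 := by
    simp [Pol, G]
  rw [this]
  intro h
  have : (n : A) = 1 := by linear_combination h
  have hn1 : (n : A) = ((1 : ℕ) : A) := by simpa using this
  have := Nat.cast_injective (R := A) hn1
  omega

/-- the real root: aeval over ℝ -/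
lemma aeval_B (n : ℕ) (hn : 2 ≤ n) : aeval (B n) (Pol n) = 0 := by
  have h := eval_identity n (B n)
  have hf : (1 : ℝ) - (B n) ^ n * (1 + B n - (B n) ^ 2) = 1 - f n (B n) := by
    unfold f; ring
  rw [hf, f_B n hn, sub_self] at h
  have hB1 : (1:ℝ) - B n ≠ 0 := by
    have := one_lt_B n hn; intro h'; linarith
  exact (mul_eq_zero.mp h).resolve_left hB1

lemma sum_B (n : ℕ) (hn : 2 ≤ n) :
    (B n) ^ (n+1) = ∑ j ∈ Finset.range n, (B n) ^ j := sum_eq (aeval_B n hn)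

/-! ## Complex roots: norm bound ≤ B n -/

lemma norm_sum_pow_le (n : ℕ) (z : ℂ) :
    ‖∑ j ∈ Finset.range n, z ^ j‖ ≤ ∑ j ∈ Finset.range n, ‖z‖ ^ j := by
  refine (norm_sum_le _ _).trans ?_
  apply Finset.sum_le_sum
  intro j _
  simp [norm_pow]

lemma norm_le_B {n : ℕ} (hn : 2 ≤ n) {z : ℂ} (hz : aeval z (Pol n) = 0) :
    ‖z‖ ≤ B n := by
  by_contra hcon
  push_neg at hcon
  set r := ‖z‖ with hr
  obtain ⟨m, rfl⟩ : ∃ m, n = m + 1 := ⟨n - 1, by omega⟩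
  have hB1 : 1 < B (m+1) := one_lt_B _ hn
  have hBpos : 0 < B (m+1) := by linarith
  have hr1 : 1 < r := lt_trans hB1 hcon
  have hsum := sum_eq hz
  have h1 : r ^ (m+2) = ‖∑ j ∈ Finset.range (m+1), z ^ j‖ := by
    rw [← hsum, norm_pow]
  have h2 : ‖∑ j ∈ Finset.range (m+1), z ^ j‖ ≤ ∑ j ∈ Finset.range (m+1), r ^ j :=
    norm_sum_pow_le _ z
  set t := r / B (m+1) with ht
  have ht1 : 1 < t := (one_lt_div hBpos).mpr hcon
  have h3 : ∀ j ∈ Finset.range (m+1), r ^ j ≤ (B (m+1)) ^ j * t ^ m := by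
    intro j hj
    have hj' : j ≤ m := by simpa [Nat.lt_succ_iff] using hj
    have hrj : r ^ j = (B (m+1)) ^ j * t ^ j := by
      rw [ht, div_pow]
      field_simp
    rw [hrj]
    have := pow_le_pow_right₀ (le_of_lt ht1) hj'
    nlinarith [pow_pos hBpos j]
  have h4 : ∑ j ∈ Finset.range (m+1), r ^ j ≤ (∑ j ∈ Finset.range (m+1), (B (m+1)) ^ j) * t ^ m := by
    rw [Finset.sum_mul]
    exact Finset.sum_le_sum h3
  have h5 : (∑ j ∈ Finset.range (m+1), (B (m+1)) ^ j) * t ^ m = (B (m+1)) ^ (m+2) * t ^ m := by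
    rw [← sum_B _ hn]
  have h6 : (B (m+1)) ^ (m+2) * t ^ m = r ^ m * (B (m+1))^2 := by
    rw [ht, div_pow]
    field_simp
    ring
  have h7 : r ^ m * (B (m+1))^2 < r ^ m * r ^ 2 := by
    have : (B (m+1))^2 < r^2 := by nlinarith
    have hrm : (0:ℝ) < r ^ m := by positivity
    nlinarith
  have h8 : r ^ m * r ^ 2 = r ^ (m+2) := by ring
  linarith

/-! ## equality case: a root of norm `B n` equals `B n` -/

lemma eq_B_of_norm_eq {n : ℕ} (hn : 2 ≤ n) {z : ℂ} (hz : aeval z (Pol n) = 0)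
    (h : ‖z‖ = B n) : z = ((B n : ℝ) : ℂ) := by
  set r := ‖z‖ with hr
  have hB1 : 1 < B n := one_lt_B _ hn
  have hr1 : 1 < r := by rw [h]; exact hB1
  have hsum := sum_eq hz
  -- split the sum: range n = Ico 0 2 ∪ Ico 2 n
  have hsplit : ∑ j ∈ Finset.range n, z ^ j
      = (1 + z) + ∑ j ∈ Finset.Ico 2 n, z ^ j := by
    rw [Finset.range_eq_Ico, ← Finset.sum_Ico_consecutive _ (by omega : 0 ≤ 2) hn]
    congr 1
    rw [show Finset.Ico 0 2 = Finset.range 2 by rw [Finset.range_eq_Ico]]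
    simp [Finset.sum_range_succ]
  have hsplitr : ∑ j ∈ Finset.range n, r ^ j
      = (1 + r) + ∑ j ∈ Finset.Ico 2 n, r ^ j := by
    rw [Finset.range_eq_Ico, ← Finset.sum_Ico_consecutive _ (by omega : 0 ≤ 2) hn]
    congr 1
    rw [show Finset.Ico 0 2 = Finset.range 2 by rw [Finset.range_eq_Ico]]
    simp [Finset.sum_range_succ]
  have htot : ‖∑ j ∈ Finset.range n, z ^ j‖ = ∑ j ∈ Finset.range n, r ^ j := by
    rw [← hsum, norm_pow, ← hr, h, sum_B n hn]
  have hIco : ‖∑ j ∈ Finset.Ico 2 n, z ^ j‖ ≤ ∑ j ∈ Finset.Ico 2 n, r ^ j := by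
    refine (norm_sum_le _ _).trans ?_
    apply Finset.sum_le_sum
    intro j _
    rw [norm_pow]
  have hge : 1 + r ≤ ‖1 + z‖ := by
    have h1 : ‖∑ j ∈ Finset.range n, z ^ j‖ ≤ ‖1 + z‖ + ∑ j ∈ Finset.Ico 2 n, r ^ j := by
      rw [hsplit]
      exact (norm_add_le _ _).trans (by linarith)
    rw [htot, hsplitr] at h1
    linarith
  have hle : ‖1 + z‖ ≤ 1 + r := by
    simpa using norm_add_le (1 : ℂ) z
  have heq : ‖1 + z‖ = 1 + r := le_antisymm hle hge
  -- squares
  have hsq : (1 + z.re)^2 + z.im^2 = (1 + r)^2 := by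
    have h1 : ‖1 + z‖^2 = Complex.normSq (1 + z) := by
      rw [← Complex.sq_norm]
    have h2 : Complex.normSq (1 + z) = (1 + z.re)^2 + z.im^2 := by
      simp [Complex.normSq_apply]; ring
    rw [heq] at h1
    rw [h2] at h1
    linarith [h1]
  have hr2 : z.re^2 + z.im^2 = r^2 := by
    have := Complex.sq_norm z
    simpa [Complex.normSq_apply, ← hr, sq] using this.symm
  have hre : z.re = r := by nlinarith [Complex.abs_re_le_norm z, le_abs_self z.re]
  have him : z.im = 0 := by nlinarith
  apply Complex.ext
  · simpa [hre] using h
  · simpa using him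

/-! ## normSq identity and the key inequality for nonreal roots -/

lemma normSq_key (z : ℂ) :
    Complex.normSq (1 + z - z ^ 2)
      = (Complex.normSq z)^2 - Complex.normSq z + 1
        - 2 * z.re * Complex.normSq z + 2 * z.re + 4 * z.im ^ 2 := by
  simp only [Complex.normSq_apply, Complex.sub_re, Complex.add_re, Complex.one_re,
    Complex.sub_im, Complex.add_im, Complex.one_im, pow_two, Complex.mul_re, Complex.mul_im]
  ring

lemma norm_lt_one {n : ℕ} (hn : 2 ≤ n) (hev : Even n) {z : ℂ}
    (hz : aeval z (Pol n) = 0) (hne : z ≠ ((B n : ℝ) : ℂ)) : ‖z‖ < 1 := by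
  set r := ‖z‖ with hr
  have hrpos : 0 ≤ r := norm_nonneg z
  have hrltB : r < B n := by
    rcases lt_or_eq_of_le (norm_le_B hn hz) with h | h
    · exact h
    · exact absurd (eq_B_of_norm_eq hn hz h) hne
  have hBphi : B n < phi := B_lt_phi n hn
  by_contra hcon
  push_neg at hcon
  have hkey : z ^ n * (1 + z - z ^ 2) = 1 := key_eq hz
  by_cases him : z.im = 0
  · -- z is real
    have hzre : z = ((z.re : ℝ) : ℂ) := Complex.ext rfl (by simpa using him)
    set x := z.re with hx
    have hxeq : x ^ n * (1 + x - x ^ 2) = 1 := by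
      have h2 := hkey
      rw [hzre] at h2
      exact_mod_cast h2
    have hxr : |x| = r := by
      rw [hr, hzre, Complex.norm_real, Real.norm_eq_abs]
    rcases le_or_gt 0 x with hx0 | hx0
    · have hxr' : x = r := by rw [← hxr, abs_of_nonneg hx0]
      rcases eq_or_lt_of_le hcon with h1 | h1
      · -- r = 1, so z = 1
        have : z = 1 := by rw [hzre, hxr', ← h1]; norm_num
        rw [this] at hz
        exact aeval_one_ne hn hz
      · have : 1 < f n x := f_gt_one n hn (by rw [hxr']; exact h1) (by rw [hxr']; exact hrltB)
        rw [f] at this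
        linarith
    · -- x negative, x ≤ -1
      have hxneg : x ≤ -1 := by
        rw [abs_of_neg hx0] at hxr
        linarith
      have h1 : 1 + x - x ^ 2 ≤ -1 := by nlinarith
      have h2 : 0 < x ^ n := hev.pow_pos (by linarith)
      nlinarith
  · -- z is not real
    have hnorm : r ^ n * ‖1 + z - z ^ 2‖ = 1 := by
      have := congrArg norm hkey
      simpa [norm_mul, norm_pow] using this
    have hra : |z.re| ≤ r := Complex.abs_re_le_norm z
    have hs : Complex.normSq z = r ^ 2 := by
      rw [← Complex.sq_norm]
    have hb2 : 0 < z.im ^ 2 := by positivity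
    have hkey2 : (r ^ 2 - r - 1) ^ 2 < Complex.normSq (1 + z - z ^ 2) := by
      have ha' : z.re ≤ r := le_trans (le_abs_self _) hra
      have h1 : 0 ≤ (r - z.re) * (r ^ 2 - 1) :=
        mul_nonneg (by linarith) (by nlinarith)
      rw [normSq_key, hs]
      nlinarith [h1, hb2]
    have hnn : Complex.normSq (1 + z - z ^ 2) = ‖1 + z - z ^ 2‖ ^ 2 := by
      rw [← Complex.sq_norm]
    have hfr : f n r < 1 := by
      have hpos : 0 < 1 + r - r ^ 2 := aux_pos (by linarith) (by linarith)
      have h3 : (r ^ n * (1 + r - r ^ 2)) ^ 2 < (r ^ n * ‖1 + z - z ^ 2‖) ^ 2 := by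
        have h4 : (1 + r - r ^ 2) ^ 2 = (r ^ 2 - r - 1) ^ 2 := by ring
        have h5 : (0:ℝ) < r ^ n := by positivity
        rw [mul_pow, mul_pow, h4]
        rw [hnn] at hkey2
        nlinarith [pow_pos h5 2]
      rw [hnorm] at h3
      have h6 : 0 < f n r := by
        rw [f]; positivity
      rw [f]
      nlinarith [h3]
    rcases eq_or_lt_of_le hcon with h1 | h1
    · rw [← h1, f_one] at hfr; linarith
    · have := f_gt_one n hn h1 hrltB
      linarith


/-! ## degree and coefficient facts -/

lemma G_degree_lt (n : ℕ) : (G n).degree < ((n+1 : ℕ) : WithBot ℕ) := by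
  unfold G
  refine lt_of_le_of_lt (degree_sum_le _ _) ?_
  rw [Finset.sup_lt_iff (by exact_mod_cast WithBot.bot_lt_coe (n+1))]
  intro j hj
  rw [degree_X_pow]
  exact_mod_cast Nat.lt_succ_of_lt (Finset.mem_range.mp hj)

def Q (n : ℕ) : Polynomial ℤ := X ^ (n+1) - G n

lemma Q_monic (n : ℕ) : (Q n).Monic := monic_X_pow_sub (G_degree_lt n)

lemma Pol_eq_neg_Q (n : ℕ) : Pol n = -(Q n) := by
  unfold Pol Q; ring

lemma Q_degree (n : ℕ) : (Q n).degree = ((n+1 : ℕ) : WithBot ℕ) := by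
  unfold Q
  rw [degree_sub_eq_left_of_degree_lt, degree_X_pow]
  rw [degree_X_pow]
  exact G_degree_lt n

lemma Pol_natDegree (n : ℕ) : (Pol n).natDegree = n + 1 := by
  rw [Pol_eq_neg_Q, natDegree_neg]
  exact natDegree_eq_of_degree_eq_some (Q_degree n)

lemma Pol_leadingCoeff (n : ℕ) : (Pol n).leadingCoeff = -1 := by
  rw [Pol_eq_neg_Q, leadingCoeff_neg, (Q_monic n).leadingCoeff]

lemma Pol_coeff_zero (n : ℕ) (hn : 2 ≤ n) : (Pol n).coeff 0 = 1 := by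
  unfold Pol G
  rw [coeff_sub, finset_sum_coeff]
  simp only [coeff_X_pow]
  rw [Finset.sum_ite_eq (Finset.range n) 0 (fun _ => (1:ℤ))]
  simp [Finset.mem_range]
  omega

lemma Pol_primitive (n : ℕ) (hn : 2 ≤ n) : (Pol n).IsPrimitive := by
  intro r hdvd
  rw [C_dvd_iff_dvd_coeff] at hdvd
  have := hdvd 0
  rw [Pol_coeff_zero n hn] at this
  exact isUnit_of_dvd_one this

/-! ## nonvanishing of the derivative at the root -/

lemma deriv_B_neg (n : ℕ) (hn : 2 ≤ n) : aeval (B n) (derivative (Pol n)) < 0 := by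
  obtain ⟨m, rfl⟩ : ∃ m, n = m + 2 := ⟨n - 2, by omega⟩
  have hβ1 : 1 < B (m+2) := one_lt_B _ hn
  have hq := q_B_neg (m+2) hn
  have hL : derivative ((1 - X) * Pol (m+2))
      = -Pol (m+2) + (1 - X) * derivative (Pol (m+2)) := by
    rw [derivative_mul]
    simp
    try ring
  have hrw : (1 : Polynomial ℤ) - X ^ (m+2) * (1 + X - X ^ 2)
      = 1 - X ^ (m+2) - X ^ (m+3) + X ^ (m+4) := by ring
  have hR : derivative (1 - X ^ (m+2) * (1 + X - X ^ 2))
      = -(C ((m+2 : ℕ) : ℤ) * X ^ (m+1)) - C ((m+3 : ℕ) : ℤ) * X ^ (m+2)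
        + C ((m+4 : ℕ) : ℤ) * X ^ (m+3) := by
    rw [hrw]
    simp [derivative_X_pow]
    ring
  have hD : -Pol (m+2) + (1 - X) * derivative (Pol (m+2))
      = -(C ((m+2 : ℕ) : ℤ) * X ^ (m+1)) - C ((m+3 : ℕ) : ℤ) * X ^ (m+2)
        + C ((m+4 : ℕ) : ℤ) * X ^ (m+3) := by
    rw [← hL, Pol_identity (m+2), hR]
  have hE := congrArg (aeval (B (m+2))) hD
  simp only [map_add, map_sub, map_mul, map_neg, map_one, aeval_X, aeval_C,
    map_pow, aeval_B (m+2) hn, algebraMap_int_eq, eq_intCast, map_intCast, map_natCast, Int.cast_natCast,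
    neg_zero, zero_add] at hE
  set β := B (m+2)
  set D := aeval β (derivative (Pol (m+2))) with hDdef
  have hE' : (1 - β) * D
      = -(((m:ℝ)+2) * β ^ (m+1)) - ((m:ℝ)+3) * β ^ (m+2) + ((m:ℝ)+4) * β ^ (m+3) := by
    push_cast at hE
    linear_combination hE
  have hqval : q (m+2) β = ((m:ℝ)+2) + ((m:ℝ)+3)*β - ((m:ℝ)+4)*β^2 := by
    unfold q; push_cast; ring
  have hrhs : -(((m:ℝ)+2) * β ^ (m+1)) - ((m:ℝ)+3) * β ^ (m+2) + ((m:ℝ)+4) * β ^ (m+3)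
      = -β ^ (m+1) * q (m+2) β := by
    rw [hqval]; ring
  have hpow : (0:ℝ) < β ^ (m+1) := by positivity
  have hpos : 0 < (1 - β) * D := by
    rw [hE', hrhs]
    nlinarith
  nlinarith

/-! ## casting aeval between ℝ and ℂ -/

lemma cast_aeval (p : Polynomial ℤ) (x : ℝ) :
    aeval ((x : ℂ)) p = ((aeval x p : ℝ) : ℂ) := by
  rw [show ((x : ℂ)) = algebraMap ℝ ℂ x from rfl,
    ← aeval_map_algebraMap (A := ℝ) (B := ℂ),
    aeval_algebraMap_apply_eq_algebraMap_eval, eval_map, ← aeval_def]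
  rfl

lemma aeval_B_complex (n : ℕ) (hn : 2 ≤ n) :
    aeval ((B n : ℝ) : ℂ) (Pol n) = 0 := by
  rw [cast_aeval, aeval_B n hn]
  simp

lemma deriv_B_complex_ne (n : ℕ) (hn : 2 ≤ n) :
    aeval ((B n : ℝ) : ℂ) (derivative (Pol n)) ≠ 0 := by
  rw [cast_aeval]
  have := deriv_B_neg n hn
  simp only [ne_eq, Complex.ofReal_eq_zero]
  linarith

/-! ## multiset product helper -/

lemma multiset_prod_lt (s : Multiset ℂ) (h : ∀ x ∈ s, ‖x‖ < 1) :
    ‖s.prod‖ ≤ 1 ∧ (s ≠ 0 → ‖s.prod‖ < 1) := by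
  induction s using Multiset.induction_on with
  | empty => simp
  | cons a s ih =>
    have ha := h a (Multiset.mem_cons_self a s)
    obtain ⟨ih1, _⟩ := ih (fun x hx => h x (Multiset.mem_cons_of_mem hx))
    rw [Multiset.prod_cons, norm_mul]
    have h0a := norm_nonneg a
    have h0s := norm_nonneg s.prod
    constructor
    · nlinarith
    · intro _; nlinarith

/-! ## irreducibility -/

lemma aeval_eq_eval_map {z : ℂ} {p : Polynomial ℤ} :
    aeval z p = eval z (p.map (Int.castRingHom ℂ)) := by
  rw [eval_map, aeval_def]
  rfl

lemma factor_unit {n : ℕ} (hn : 2 ≤ n) (hev : Even n) {A Bq : Polynomial ℤ}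
    (hP : Pol n = A * Bq) (hA : aeval ((B n : ℝ) : ℂ) A = 0) : IsUnit Bq := by
  have hc0 : A.coeff 0 * Bq.coeff 0 = 1 := by
    rw [← mul_coeff_zero, ← hP, Pol_coeff_zero n hn]
  by_cases hdeg : Bq.natDegree = 0
  · rw [eq_C_of_natDegree_eq_zero hdeg]
    exact isUnit_C.mpr (IsUnit.of_mul_eq_one _ (mul_comm (A.coeff 0) _ ▸ hc0))
  · exfalso
    have hlead : A.leadingCoeff * Bq.leadingCoeff = -1 := by
      rw [← leadingCoeff_mul, ← hP, Pol_leadingCoeff]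
    have hlB : IsUnit Bq.leadingCoeff :=
      IsUnit.of_mul_eq_one (-A.leadingCoeff) (by linear_combination -hlead)
    have hlBne : ((Bq.leadingCoeff : ℤ) : ℂ) ≠ 0 := by
      rcases Int.isUnit_iff.mp hlB with h | h <;> rw [h] <;> norm_num
    set Bq' := Bq.map (Int.castRingHom ℂ) with hBq'
    have hdegmap : Bq'.natDegree = Bq.natDegree :=
      natDegree_map_of_leadingCoeff_ne_zero _ hlBne
    have hBq'ne : Bq' ≠ 0 := by
      intro h
      rw [h, natDegree_zero] at hdegmap
      omega
    have hsplits : Splits Bq' := IsAlgClosed.splits Bq'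
    have hcard : Bq'.roots.card = Bq.natDegree := by
      rw [← hdegmap]
      exact splits_iff_card_roots.mp hsplits
    -- all roots have norm < 1
    have hroots : ∀ w ∈ Bq'.roots, ‖w‖ < 1 := by
      intro w hw
      have hwroot : aeval w Bq = 0 := by
        rw [aeval_eq_eval_map]
        exact (mem_roots hBq'ne).mp hw
      have hwP : aeval w (Pol n) = 0 := by
        rw [hP, map_mul, hwroot, mul_zero]
      have hwne : w ≠ ((B n : ℝ) : ℂ) := by
        rintro rfl
        have hder := congrArg derivative hP
        rw [derivative_mul] at hder
        have := congrArg (aeval ((B n : ℝ) : ℂ)) hder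
        simp only [map_add, map_mul, hA, hwroot, mul_zero, zero_mul, add_zero] at this
        exact deriv_B_complex_ne n hn this
      exact norm_lt_one hn hev hwP hwne
    -- product of roots
    have hprodeq := hsplits.eq_prod_roots
    have heval0 := congrArg (eval 0) hprodeq
    rw [eval_mul, eval_C, eval_multiset_prod, Multiset.map_map] at heval0
    have hevalcoeff : eval 0 Bq' = ((Bq.coeff 0 : ℤ) : ℂ) := by
      rw [← coeff_zero_eq_eval_zero, hBq', coeff_map]
      rfl
    have hc0B : IsUnit (Bq.coeff 0) :=
      IsUnit.of_mul_eq_one (A.coeff 0) (mul_comm (Bq.coeff 0) _ ▸ hc0)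
    have hnorm1 : ‖eval 0 Bq'‖ = 1 := by
      rw [hevalcoeff]
      rcases Int.isUnit_iff.mp hc0B with h | h <;> rw [h] <;> norm_num
    have hnormlead : ‖Bq'.leadingCoeff‖ = 1 := by
      rw [hBq', leadingCoeff_map_of_leadingCoeff_ne_zero _ hlBne]
      rcases Int.isUnit_iff.mp hlB with h | h <;>
        simp only [h, eq_intCast] <;> norm_num
    set s : Multiset ℂ := Bq'.roots.map (eval 0 ∘ fun a => X - C a) with hs
    have hsnorm : ∀ x ∈ s, ‖x‖ < 1 := by
      intro x hx
      rw [hs] at hx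
      obtain ⟨a, ha, rfl⟩ := Multiset.mem_map.mp hx
      have hcomp : (eval 0 ∘ fun a => X - C a) a = -a := by simp
      rw [hcomp, norm_neg]
      exact hroots a ha
    have hsne : s ≠ 0 := by
      rw [hs]
      intro h
      have := Multiset.card_eq_zero.mpr h
      rw [Multiset.card_map, hcard] at this
      omega
    obtain ⟨_, hlt⟩ := multiset_prod_lt s hsnorm
    have := hlt hsne
    rw [heval0, norm_mul, hnormlead, one_mul] at hnorm1
    rw [hnorm1] at this
    exact lt_irrefl 1 this

lemma Pol_not_unit {n : ℕ} : ¬ IsUnit (Pol n) := by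
  intro h
  have := natDegree_eq_zero_of_isUnit h
  rw [Pol_natDegree] at this
  omega

lemma Pol_irreducible {n : ℕ} (hn : 2 ≤ n) (hev : Even n) : Irreducible (Pol n) := by
  constructor
  · exact Pol_not_unit
  · intro A Bq hAB
    have hroot : aeval ((B n : ℝ) : ℂ) (Pol n) = 0 := aeval_B_complex n hn
    rw [hAB, map_mul] at hroot
    rcases mul_eq_zero.mp hroot with h | h
    · exact Or.inr (factor_unit hn hev hAB h)
    · exact Or.inl (factor_unit hn hev (by rw [hAB, mul_comm]) h)

lemma Pol_irreducible_Q {n : ℕ} (hn : 2 ≤ n) (hev : Even n) :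
    Irreducible ((Pol n).map (Int.castRingHom ℚ)) :=
  (IsPrimitive.Int.irreducible_iff_irreducible_map_cast (Pol_primitive n hn)).mp
    (Pol_irreducible hn hev)

lemma B_isIntegral (n : ℕ) (hn : 2 ≤ n) : IsIntegral ℤ (B n) := by
  refine ⟨Q n, Q_monic n, ?_⟩
  rw [← aeval_def]
  have : aeval (B n) (Q n) = -(aeval (B n) (Pol n)) := by
    rw [Pol_eq_neg_Q, map_neg, neg_neg]
  rw [this, aeval_B n hn, neg_zero]


/-! ## monotonicity and limit -/

lemma B_mono (n : ℕ) (hn : 2 ≤ n) : B n < B (n+2) := by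
  have h1 : f (n+2) (B n) = (B n) ^ 2 * f n (B n) := by
    unfold f; ring
  rw [f_B n hn, mul_one] at h1
  have hB1 : 1 < B n := one_lt_B n hn
  have h2 : 1 < f (n+2) (B n) := by rw [h1]; nlinarith
  exact lt_B_of_f_gt (n+2) (by omega) hB1 (B_lt_phi n hn) h2

lemma B_tendsto : Tendsto (fun k : ℕ => B (2*k)) atTop (nhds phi) := by
  rw [tendsto_order]
  constructor
  · intro a ha
    rcases le_or_gt a (6/5) with h | h
    · filter_upwards [eventually_ge_atTop 1] with k hk
      exact lt_of_le_of_lt h (B_gt (2*k) (by omega))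
    · have ha1 : 1 < a := by linarith
      have hc : 0 < 1 + a - a ^ 2 := aux_pos (by linarith) ha
      have h2k : Tendsto (fun k : ℕ => 2*k) atTop atTop :=
        tendsto_atTop_atTop_of_monotone (fun x y hxy => by omega) (fun b => ⟨b, by omega⟩)
      have htend : Tendsto (fun k : ℕ => a ^ (2*k)) atTop atTop :=
        (tendsto_pow_atTop_atTop_of_one_lt ha1).comp h2k
      filter_upwards [htend.eventually_gt_atTop (1/(1 + a - a ^ 2)),
        eventually_ge_atTop 1] with k h1 hk
      have hfa : 1 < f (2*k) a := by
        rw [f]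
        rw [div_lt_iff₀ hc] at h1
        nlinarith
      exact lt_B_of_f_gt (2*k) (by omega) ha1 ha hfa
  · intro a ha
    filter_upwards [eventually_ge_atTop 1] with k hk
    exact lt_trans (B_lt_phi (2*k) (by omega)) ha

end Stmt17

/-- The polynomials `P_{2k}(z) = (1 - z^{2k}(1 + z - z^2))/(1 - z)` are
integer polynomials, irreducible over `ℚ`, each with exactly one root
`β_k` of modulus `> 1`, which is a Pisot number; the sequence `(β_k)` is
strictly increasing with limit the golden ratio `(1 + √5)/2`. -/
theorem stmt_17 :
    ∃ β : ℕ → ℝ,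
      (∀ k, 1 ≤ k → ∃ P : Polynomial ℤ,
        (1 - X) * P = 1 - X ^ (2 * k) * (1 + X - X ^ 2) ∧
        Irreducible (P.map (Int.castRingHom ℚ)) ∧
        1 < β k ∧ IsIntegral ℤ (β k) ∧
        Polynomial.aeval (β k) P = 0 ∧
        (∀ z : ℂ, Polynomial.aeval z P = 0 → z ≠ (β k : ℂ) → ‖z‖ < 1) ∧
        β k < (1 + Real.sqrt 5) / 2) ∧
      (∀ k, 1 ≤ k → β k < β (k + 1)) ∧
      Tendsto β atTop (nhds ((1 + Real.sqrt 5) / 2)) := by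
  refine ⟨fun k => Stmt17.B (2*k), ?_, ?_, ?_⟩
  · intro k hk
    have hn : 2 ≤ 2*k := by omega
    have hev : Even (2*k) := even_two_mul k
    refine ⟨Stmt17.Pol (2*k), Stmt17.Pol_identity (2*k), Stmt17.Pol_irreducible_Q hn hev,
      Stmt17.one_lt_B _ hn, Stmt17.B_isIntegral _ hn, Stmt17.aeval_B _ hn,
      fun z hz hne => Stmt17.norm_lt_one hn hev hz hne, Stmt17.B_lt_phi _ hn⟩
  · intro k hk
    have h := Stmt17.B_mono (2*k) (by omega)
    show Stmt17.B (2*k) < Stmt17.B (2*(k+1))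
    rw [show 2*(k+1) = 2*k + 2 by ring]
    exact h
  · exact Stmt17.B_tendsto
end
end

section
/- Let α be an algebraic integer of degree d with Galois conjugates α_1 = α, α_2, …, α_d, and suppose |α_i| ≠ 1 for every i. For q ≥ 1 let Δ_q(α) = |∏_{i=1}^d (1 − α_i^q)| denote the q-th Pierce number of α (which is a nonzero integer under these hypotheses). Then lim_{q→∞} Δ_{q+1}(α)/Δ_q(α) = M(α), where M(α) = ∏_{i=1}^d max(1, |α_i|) is the Mahler measure of α. -/
open Polynomial Filter

private lemma aux_ratio (α : ℂ) (h : ‖α‖ ≠ 1) :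
    Tendsto (fun q : ℕ => ‖1 - α ^ (q + 1)‖ / ‖1 - α ^ q‖) atTop
      (nhds (max 1 ‖α‖)) := by
  rcases lt_or_gt_of_ne h with hlt | hgt
  · have h0 : Tendsto (fun q : ℕ => α ^ q) atTop (nhds 0) :=
      tendsto_pow_atTop_nhds_zero_of_norm_lt_one hlt
    have h1 : Tendsto (fun q : ℕ => ‖1 - α ^ q‖) atTop (nhds 1) := by
      have := ((tendsto_const_nhds : Tendsto (fun _ : ℕ => (1:ℂ)) atTop (nhds 1)).sub h0).norm
      simpa using this
    have h2 : Tendsto (fun q : ℕ => ‖1 - α ^ (q + 1)‖) atTop (nhds 1) := by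
      have := h1.comp (tendsto_add_atTop_nat 1)
      simpa [Function.comp_def] using this
    have hdiv : Tendsto (fun q : ℕ => ‖1 - α ^ (q + 1)‖ / ‖1 - α ^ q‖) atTop (nhds (1 / 1)) :=
      Tendsto.div h2 h1 one_ne_zero
    rw [max_eq_left hlt.le]
    simpa using hdiv
  · have hα0 : α ≠ 0 := by
      intro h'
      simp [h'] at hgt
      linarith
    have hinv : ‖α⁻¹‖ < 1 := by
      rw [norm_inv]
      rw [inv_lt_one_iff₀]
      right; exact hgt
    have key : ∀ q : ℕ, 1 - α ^ q = α ^ q * ((α⁻¹) ^ q - 1) := by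
      intro q
      rw [mul_sub, mul_one, ← mul_pow, mul_inv_cancel₀ hα0, one_pow]
    have hnorm : ∀ q : ℕ, ‖1 - α ^ q‖ = ‖α‖ ^ q * ‖(α⁻¹) ^ q - 1‖ := by
      intro q; rw [key q, norm_mul, norm_pow]
    have heq : ∀ q : ℕ, ‖1 - α ^ (q + 1)‖ / ‖1 - α ^ q‖
        = ‖α‖ * (‖(α⁻¹) ^ (q + 1) - 1‖ / ‖(α⁻¹) ^ q - 1‖) := by
      intro q
      rw [hnorm, hnorm, pow_succ, mul_comm (‖α‖ ^ q) ‖α‖, mul_assoc]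
      rw [mul_div_assoc, mul_div_mul_left _ _ (pow_ne_zero q (by positivity))]
    have h0 : Tendsto (fun q : ℕ => (α⁻¹) ^ q) atTop (nhds 0) :=
      tendsto_pow_atTop_nhds_zero_of_norm_lt_one hinv
    have h1 : Tendsto (fun q : ℕ => ‖(α⁻¹) ^ q - 1‖) atTop (nhds 1) := by
      have := (h0.sub (tendsto_const_nhds : Tendsto (fun _ : ℕ => (1:ℂ)) atTop (nhds 1))).norm
      simpa using this
    have h2 : Tendsto (fun q : ℕ => ‖(α⁻¹) ^ (q + 1) - 1‖) atTop (nhds 1) := by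
      have := h1.comp (tendsto_add_atTop_nat 1)
      simpa [Function.comp_def] using this
    have hdiv : Tendsto (fun q : ℕ => ‖(α⁻¹) ^ (q + 1) - 1‖ / ‖(α⁻¹) ^ q - 1‖) atTop
        (nhds (1 / 1)) := Tendsto.div h2 h1 one_ne_zero
    have hmain : Tendsto (fun q : ℕ =>
        ‖α‖ * (‖(α⁻¹) ^ (q + 1) - 1‖ / ‖(α⁻¹) ^ q - 1‖)) atTop (nhds ‖α‖) := by
      have := (tendsto_const_nhds : Tendsto (fun _ : ℕ => ‖α‖) atTop (nhds ‖α‖)).mul hdiv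
      simpa using this
    have hfinal : Tendsto (fun q : ℕ => ‖1 - α ^ (q + 1)‖ / ‖1 - α ^ q‖) atTop (nhds ‖α‖) :=
      hmain.congr fun q => (heq q).symm
    rw [max_eq_right hgt.le]
    exact hfinal

/-- Lehmer's limit: the ratio of consecutive Pierce numbers of an algebraic
integer with no conjugate of modulus `1` tends to its Mahler measure. -/
theorem stmt_18
    (α : ℂ) (hint : IsIntegral ℤ α)
    (d : ℕ) (hd : d = (minpoly ℚ α).natDegree) (hd1 : 0 < d)
    (αs : Fin d → ℂ)
    (hroots : (minpoly ℚ α).map (algebraMap ℚ ℂ) = ∏ i, (X - C (αs i)))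
    (hα0 : αs ⟨0, hd1⟩ = α)
    (hmod : ∀ i, ‖αs i‖ ≠ 1)
    (Δ : ℕ → ℝ) (hΔ : ∀ q, Δ q = ‖∏ i, (1 - αs i ^ q)‖) :
    Tendsto (fun q : ℕ => Δ (q + 1) / Δ q) atTop
      (nhds (∏ i, max 1 ‖αs i‖)) := by
  have hΔeq : ∀ q, Δ q = ∏ i, ‖1 - αs i ^ q‖ := by
    intro q; rw [hΔ q, norm_prod]
  have hfun : (fun q : ℕ => Δ (q + 1) / Δ q)
      = fun q : ℕ => ∏ i, ‖1 - αs i ^ (q + 1)‖ / ‖1 - αs i ^ q‖ := by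
    funext q
    rw [hΔeq, hΔeq, ← Finset.prod_div_distrib]
  rw [hfun]
  exact tendsto_finset_prod _ fun i _ => aux_ratio (αs i) (hmod i)
end
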